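/- Let κ < 0, u₀ < 0, and let (u,v) solve u' = v/√(1+v²), v' = κu with u(0) = u₀, v(0) = 0. Let r₀ > 0 be a zero of u. Then |u'(r₀)| = (-u₀/(2 - κu₀²))·√(κ²u₀² - 4κ); equivalently, the maximum of |u'| over ℝ equals this value and is attained exactly at the zeros of u. -/

import Mathlib

lemma aux_strict (s Cv : ℝ) (hs : 1 ≤ s) (hsC : s < Cv) :
    Real.sqrt (s ^ 2 - 1) / s < Real.sqrt (Cv ^ 2 - 1) / Cv := by
  have hspos : 0 < s := by linarith
  have hCpos : 0 < Cv := by linarith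
  rw [div_lt_div_iff₀ hspos hCpos]
  have h1 : 0 ≤ s ^ 2 - 1 := by nlinarith
  have h2 : 0 ≤ Cv ^ 2 - 1 := by nlinarith
  have hsq : (Real.sqrt (s ^ 2 - 1) * Cv) ^ 2 < (Real.sqrt (Cv ^ 2 - 1) * s) ^ 2 := by
    rw [mul_pow, mul_pow, Real.sq_sqrt h1, Real.sq_sqrt h2]
    nlinarith
  exact lt_of_pow_lt_pow_left₀ 2 (by positivity) hsq

lemma aux_M (κ u₀ : ℝ) (hκ : κ < 0) (hu₀ : u₀ < 0) :
    Real.sqrt ((1 - κ * u₀ ^ 2 / 2) ^ 2 - 1) / (1 - κ * u₀ ^ 2 / 2)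
      = (-u₀ / (2 - κ * u₀ ^ 2)) * Real.sqrt (κ ^ 2 * u₀ ^ 2 - 4 * κ) := by
  have h1 : (1 - κ * u₀ ^ 2 / 2) ^ 2 - 1 = (-u₀ / 2) ^ 2 * (κ ^ 2 * u₀ ^ 2 - 4 * κ) := by ring
  have hden : (0:ℝ) < 2 - κ * u₀ ^ 2 := by nlinarith [sq_nonneg u₀]
  rw [h1, Real.sqrt_mul (sq_nonneg _), Real.sqrt_sq (by linarith : (0:ℝ) ≤ -u₀ / 2)]
  field_simp

/-- Pendent case: maximum slope occurs exactly at the zeros of u. -/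
theorem stmt_18 (κ u₀ : ℝ) (hκ : κ < 0) (hu₀ : u₀ < 0) (u v : ℝ → ℝ)
    (hu : ∀ r : ℝ, HasDerivAt u (v r / Real.sqrt (1 + v r ^ 2)) r)
    (hv : ∀ r : ℝ, HasDerivAt v (κ * u r) r)
    (hu0 : u 0 = u₀) (hv0 : v 0 = 0) :
    (∀ r₀ : ℝ, u r₀ = 0 →
      |v r₀ / Real.sqrt (1 + v r₀ ^ 2)| =
        (-u₀ / (2 - κ * u₀ ^ 2)) * Real.sqrt (κ ^ 2 * u₀ ^ 2 - 4 * κ)) ∧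
    (∀ r : ℝ, |v r / Real.sqrt (1 + v r ^ 2)| ≤
        (-u₀ / (2 - κ * u₀ ^ 2)) * Real.sqrt (κ ^ 2 * u₀ ^ 2 - 4 * κ)) ∧
    (∀ r : ℝ, |v r / Real.sqrt (1 + v r ^ 2)| =
        (-u₀ / (2 - κ * u₀ ^ 2)) * Real.sqrt (κ ^ 2 * u₀ ^ 2 - 4 * κ) ↔ u r = 0) := by
  have hu₀sq : 0 < u₀ ^ 2 := by nlinarith
  set C : ℝ := 1 - κ * u₀ ^ 2 / 2 with hCdef
  have hC1 : (1:ℝ) < C := by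
    simp only [hCdef]; nlinarith
  have hCpos : (0:ℝ) < C := by linarith
  have hpos : ∀ r, (0:ℝ) < 1 + v r ^ 2 := fun r => by nlinarith [sq_nonneg (v r)]
  have hsqpos : ∀ r, 0 < Real.sqrt (1 + v r ^ 2) := fun r => Real.sqrt_pos.mpr (hpos r)
  -- conservation law
  set F : ℝ → ℝ := fun r => Real.sqrt (1 + v r ^ 2) - κ * u r ^ 2 / 2 with hFdef
  have hF : ∀ r, HasDerivAt F 0 r := by
    intro r
    have h1 : HasDerivAt (fun r => 1 + v r ^ 2) (2 * v r * (κ * u r)) r := by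
      have := ((hv r).pow 2).const_add 1
      refine this.congr_deriv ?_
      push_cast
      ring
    have h2 := h1.sqrt (ne_of_gt (hpos r))
    have h3 : HasDerivAt (fun r => κ * u r ^ 2 / 2)
        (κ * ((2 : ℕ) * u r ^ (2 - 1) * (v r / Real.sqrt (1 + v r ^ 2))) / 2) r :=
      (((hu r).pow 2).const_mul κ).div_const 2
    have h4 := h2.sub h3
    refine h4.congr_deriv ?_
    have hs := (hsqpos r).ne'
    field_simp
    ring
  have hconst : ∀ r, F r = F 0 := by
    intro r
    have hd : ∀ x, deriv F x = 0 := fun x => (hF x).deriv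
    have hdiff : Differentiable ℝ F := fun x => (hF x).differentiableAt
    exact is_const_of_deriv_eq_zero hdiff hd r 0
  have hF0 : F 0 = C := by
    simp [hFdef, hv0, hu0, hCdef, Real.sqrt_one]
  have hcons : ∀ r, Real.sqrt (1 + v r ^ 2) = C + κ * u r ^ 2 / 2 := by
    intro r
    have := (hconst r).trans hF0
    simp only [hFdef] at this
    linarith
  -- per-point facts
  have key : ∀ r, |v r / Real.sqrt (1 + v r ^ 2)|
      = Real.sqrt ((C + κ * u r ^ 2 / 2) ^ 2 - 1) / (C + κ * u r ^ 2 / 2) := by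
    intro r
    have hs := hcons r
    have hsq : (C + κ * u r ^ 2 / 2) ^ 2 = 1 + v r ^ 2 := by
      rw [← hs, Real.sq_sqrt (hpos r).le]
    have hvsq : v r ^ 2 = (C + κ * u r ^ 2 / 2) ^ 2 - 1 := by linarith
    rw [abs_div, abs_of_pos (hsqpos r), hs, ← hvsq, ← Real.sqrt_sq_eq_abs]
  have hs1 : ∀ r, (1:ℝ) ≤ C + κ * u r ^ 2 / 2 := by
    intro r
    rw [← hcons r]
    have h := Real.sqrt_le_sqrt (show (1:ℝ) ≤ 1 + v r ^ 2 by nlinarith [sq_nonneg (v r)])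
    simpa using h
  have hsC : ∀ r, C + κ * u r ^ 2 / 2 ≤ C := by
    intro r
    nlinarith [sq_nonneg (u r)]
  have hM := aux_M κ u₀ hκ hu₀
  rw [← hCdef] at hM
  -- main le and iff
  have hle : ∀ r, |v r / Real.sqrt (1 + v r ^ 2)| ≤
      (-u₀ / (2 - κ * u₀ ^ 2)) * Real.sqrt (κ ^ 2 * u₀ ^ 2 - 4 * κ) := by
    intro r
    rw [key r, ← hM]
    rcases eq_or_lt_of_le (hsC r) with h | h
    · rw [h]
    · exact (aux_strict _ _ (hs1 r) h).le
  have hiff : ∀ r, |v r / Real.sqrt (1 + v r ^ 2)| =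
      (-u₀ / (2 - κ * u₀ ^ 2)) * Real.sqrt (κ ^ 2 * u₀ ^ 2 - 4 * κ) ↔ u r = 0 := by
    intro r
    rw [key r, ← hM]
    constructor
    · intro h
      by_contra hne
      have hurp : u r ^ 2 > 0 := by positivity
      have hlt : C + κ * u r ^ 2 / 2 < C := by nlinarith
      exact absurd h (ne_of_lt (aux_strict _ _ (hs1 r) hlt))
    · intro h
      rw [h]
      norm_num
  exact ⟨fun r₀ h => (hiff r₀).mpr h, hle, hiff⟩
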